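/- For integers 0 ≤ n ≤ N, define A_n^N = Σ_{k=0}^{N-n} (-1)^k · C(n+k, n). Then 2·A_n^N − A_{n-1}^{N-1} = (−1)^{N−n} · C(N, n) for all 1 ≤ n ≤ N. -/

import Mathlib

/-- `A n N = ∑_{k=0}^{N-n} (-1)^k * C(n+k, n)` as an integer. -/
def altBinomSum (n N : ℕ) : ℤ :=
  ∑ k ∈ Finset.range (N - n + 1), (-1 : ℤ) ^ k * ((n + k).choose n : ℤ)

lemma aux_alt (n : ℕ) (hn : 1 ≤ n) : ∀ m : ℕ,
    2 * (∑ k ∈ Finset.range (m + 1), (-1 : ℤ) ^ k * ((n + k).choose n : ℤ))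
      - (∑ k ∈ Finset.range (m + 1), (-1 : ℤ) ^ k * ((n - 1 + k).choose (n - 1) : ℤ))
      = (-1 : ℤ) ^ m * ((n + m).choose n : ℤ) := by
  obtain ⟨p, rfl⟩ : ∃ p, n = p + 1 := ⟨n - 1, by omega⟩
  simp only [Nat.add_sub_cancel]
  intro m
  induction m with
  | zero => simp
  | succ m ih =>
    rw [Finset.sum_range_succ _ (m + 1), Finset.sum_range_succ _ (m + 1)]
    have h2 : (p + 1 + (m + 1)).choose (p + 1) = (p + 1 + m).choose p + (p + 1 + m).choose (p + 1) := by
      rw [show p + 1 + (m + 1) = (p + 1 + m) + 1 from by omega, Nat.choose_succ_succ]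
    have h1 : p + (m + 1) = p + 1 + m := by omega
    rw [h1, h2]
    push_cast
    linear_combination ih + (2 * (-1:ℤ)^(m+1) - (-1:ℤ)^(m+1) + (-1:ℤ)^m) * ((p + 1 + m).choose p : ℤ)

theorem stmt0 (n N : ℕ) (hn : 1 ≤ n) (hnN : n ≤ N) :
    2 * altBinomSum n N - altBinomSum (n - 1) (N - 1) =
      (-1 : ℤ) ^ (N - n) * (N.choose n : ℤ) := by
  obtain ⟨m, rfl⟩ : ∃ m, N = n + m := ⟨N - n, by omega⟩
  have h1 : n + m - n = m := by omega
  have h2 : n + m - 1 - (n - 1) = m := by omega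
  rw [altBinomSum, altBinomSum, h1, h2]
  exact aux_alt n hn m
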